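/- For each n ≥ 0 define the truncated map Li*^{≤n} on words by Li*^{≤n}(z_{s_1,u_1} ⋯ z_{s_r,u_r}) = Σ_{n ≥ i_1 ≥ ⋯ ≥ i_r ≥ 0} u_1^{q^{i_1}} ⋯ u_r^{q^{i_r}} / (L_{i_1}^{s_1} ⋯ L_{i_r}^{s_r}) and Li*^{≤n}(1) = 1, extended linearly. Then for all words w, w' and all n ≥ 0, Li*^{≤n}(w ⋆ w') = Li*^{≤n}(w) · Li*^{≤n}(w'), where ⋆ is the stuffle product. -/

import Mathlib

/-- Stuffle product of words (letters are pairs `(s,u)`), valued in the free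
`F`-module on words. -/
noncomputable def stuffleW {F : Type*} [Field F] :
    List (ℕ × F) → List (ℕ × F) → (List (ℕ × F) →₀ F)
  | [], w => Finsupp.single w 1
  | x :: w, [] => Finsupp.single (x :: w) 1
  | x :: w, y :: w' =>
      Finsupp.mapDomain (fun l => x :: l) (stuffleW w (y :: w')) +
      Finsupp.mapDomain (fun l => y :: l) (stuffleW (x :: w) w') -
      Finsupp.mapDomain (fun l => (x.1 + y.1, x.2 * y.2) :: l) (stuffleW w w')
  termination_by w w' => w.length + w'.length

/-- The truncated star polylogarithm `Li*^{≤n}` on words: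
`Li*^{≤n}(z_{s_1,u_1}⋯z_{s_r,u_r}) = Σ_{n ≥ i_1 ≥ ⋯ ≥ i_r ≥ 0} ∏ u_m^{q^{i_m}}/L_{i_m}^{s_m}`,
`Li*^{≤n}(1) = 1`, defined by the equivalent recursion
`Li*^{≤n}(z_{s,u} w) = Σ_{i=0}^{n} (u^{q^i}/L_i^s)·Li*^{≤i}(w)`. -/
noncomputable def liTrunc {F : Type*} [Field F] (q : ℕ) (Lval : ℕ → F) :
    ℕ → List (ℕ × F) → F
  | _, [] => 1
  | n, (s, u) :: w =>
      ∑ i ∈ Finset.range (n + 1), u ^ q ^ i / (Lval i) ^ s * liTrunc q Lval i w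
  termination_by n w => w.length

private lemma liTrunc_nil {F : Type*} [Field F] (q : ℕ) (Lval : ℕ → F) (n : ℕ) :
    liTrunc q Lval n [] = 1 := by rw [liTrunc]

private lemma liTrunc_cons {F : Type*} [Field F] (q : ℕ) (Lval : ℕ → F) (n s : ℕ) (u : F)
    (w : List (ℕ × F)) :
    liTrunc q Lval n ((s, u) :: w) =
      ∑ i ∈ Finset.range (n + 1), u ^ q ^ i / (Lval i) ^ s * liTrunc q Lval i w := by
  rw [liTrunc]

/-- triangle decomposition of a product of sums -/
private lemma triangle {F : Type*} [Field F] (f g : ℕ → F) (n : ℕ) :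
    (∑ i ∈ Finset.range (n + 1), f i) * (∑ j ∈ Finset.range (n + 1), g j) =
      (∑ i ∈ Finset.range (n + 1), f i * ∑ j ∈ Finset.range (i + 1), g j) +
      (∑ j ∈ Finset.range (n + 1), (∑ i ∈ Finset.range (j + 1), f i) * g j) -
      ∑ i ∈ Finset.range (n + 1), f i * g i := by
  induction n with
  | zero => simp
  | succ n ih =>
    simp only [Finset.sum_range_succ] at ih ⊢
    linear_combination ih

private lemma sum_liTrunc_cons {F : Type*} [Field F] (q : ℕ) (Lval : ℕ → F) (n s : ℕ) (u : F)
    (g : List (ℕ × F) →₀ F) :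
    (g.sum fun l a => a * liTrunc q Lval n ((s, u) :: l)) =
      ∑ i ∈ Finset.range (n + 1),
        u ^ q ^ i / (Lval i) ^ s * g.sum fun l a => a * liTrunc q Lval i l := by
  rw [Finsupp.sum]
  simp_rw [liTrunc_cons, Finsupp.sum, Finset.mul_sum]
  rw [Finset.sum_comm]
  apply Finset.sum_congr rfl
  intro i _
  apply Finset.sum_congr rfl
  intro l _
  ring

private lemma key {F : Type*} [Field F] (q : ℕ) (Lval : ℕ → F) :
    ∀ (k : ℕ) (w w' : List (ℕ × F)), w.length + w'.length ≤ k → ∀ n : ℕ,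
    ((stuffleW w w').sum fun w'' a => a * liTrunc q Lval n w'') =
      liTrunc q Lval n w * liTrunc q Lval n w' := by
  intro k
  induction k with
  | zero =>
    intro w w' hlen n
    match w, w' with
    | [], [] =>
      rw [stuffleW]
      rw [Finsupp.sum_single_index (by simp)]
      simp [liTrunc_nil]
    | _ :: _, _ => simp [List.length_cons] at hlen
    | [], _ :: _ => simp at hlen
  | succ k ih =>
    intro w w' hlen n
    match w, w' with
    | [], w' =>
      rw [stuffleW]
      rw [Finsupp.sum_single_index (by simp), liTrunc_nil, one_mul]
    | x :: w, [] =>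
      rw [stuffleW]
      rw [Finsupp.sum_single_index (by simp), liTrunc_nil, one_mul, mul_one]
    | (s, u) :: w, (t, v) :: w' =>
      rw [stuffleW]
      rw [Finsupp.sum_sub_index (by intros; ring)]
      rw [Finsupp.sum_add_index' (by intros; simp) (by intros; ring)]
      rw [Finsupp.sum_mapDomain_index (by intros; simp) (by intros; ring)]
      rw [Finsupp.sum_mapDomain_index (by intros; simp) (by intros; ring)]
      rw [Finsupp.sum_mapDomain_index (by intros; simp) (by intros; ring)]
      rw [sum_liTrunc_cons, sum_liTrunc_cons, sum_liTrunc_cons]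
      have h1 : ∀ i : ℕ, ((stuffleW w ((t, v) :: w')).sum fun l a => a * liTrunc q Lval i l) =
          liTrunc q Lval i w * liTrunc q Lval i ((t, v) :: w') := by
        intro i
        apply ih
        simp only [List.length_cons] at hlen ⊢
        omega
      have h2 : ∀ i : ℕ, ((stuffleW ((s, u) :: w) w').sum fun l a => a * liTrunc q Lval i l) =
          liTrunc q Lval i ((s, u) :: w) * liTrunc q Lval i w' := by
        intro i
        apply ih
        simp only [List.length_cons] at hlen ⊢
        omega
      have h3 : ∀ i : ℕ, ((stuffleW w w').sum fun l a => a * liTrunc q Lval i l) =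
          liTrunc q Lval i w * liTrunc q Lval i w' := by
        intro i
        apply ih
        simp only [List.length_cons] at hlen ⊢
        omega
      simp_rw [h1, h2, h3]
      rw [liTrunc_cons q Lval n s u w, liTrunc_cons q Lval n t v w']
      rw [triangle (fun i => u ^ q ^ i / Lval i ^ s * liTrunc q Lval i w)
        (fun j => v ^ q ^ j / Lval j ^ t * liTrunc q Lval j w') n]
      simp_rw [liTrunc_cons]
      congr 1
      · congr 1
        · apply Finset.sum_congr rfl
          intro i _
          ring
        · apply Finset.sum_congr rfl
          intro j _
          ring
      · apply Finset.sum_congr rfl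
        intro i _
        rw [mul_pow, pow_add]
        field_simp

/-- truncated multiplicativity — for all words `w, w'` and all `n`,
`Li*^{≤n}(w ⋆ w') = Li*^{≤n}(w) · Li*^{≤n}(w')`, where the left-hand side is the
linear extension of `Li*^{≤n}` applied to the stuffle product. -/
theorem stmt_7 {F : Type*} [Field F] (q : ℕ) (hq : 2 ≤ q)
    (Lval : ℕ → F) (hL0 : ∀ i, Lval i ≠ 0)
    (w w' : List (ℕ × F))
    (hw : ∀ p ∈ w, 1 ≤ p.1) (hw' : ∀ p ∈ w', 1 ≤ p.1) (n : ℕ) :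
    ((stuffleW w w').sum fun w'' a => a * liTrunc q Lval n w'') =
      liTrunc q Lval n w * liTrunc q Lval n w' := by
  exact key q Lval (w.length + w'.length) w w' le_rfl n
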